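/- Let (S, ⪯) be a rooted tree without leaves (no maximal elements) and let α ∈ (0,1). A function F : S → (0, 1] is the upper probability function of a probability density function on S with constant rate α if and only if F(e) = 1 and ∑_{y ∈ A(x)} F(y) = (1 − α) F(x) for every x ∈ S. -/

import Mathlib

open scoped ENNReal NNReal

section Aux
variable {S : Type*} [PartialOrder S]
variable (hfin : ∀ x : S, {t : S | t ≤ x}.Finite)

private noncomputable def rk (x : S) : ℕ := (hfin x).toFinset.card

private lemma rk_mono {x y : S} (h : x ≤ y) : rk hfin x ≤ rk hfin y := by
  apply Finset.card_le_card
  intro s hs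
  simp only [Set.Finite.mem_toFinset, Set.mem_setOf_eq] at *
  exact hs.trans h

private lemma rk_lt {x y : S} (h : x < y) : rk hfin x < rk hfin y := by
  apply Finset.card_lt_card
  rw [Finset.ssubset_def]
  constructor
  · intro s hs
    simp only [Set.Finite.mem_toFinset, Set.mem_setOf_eq] at *
    exact hs.trans h.le
  · intro hsub
    have hy : y ∈ (hfin y).toFinset := by
      simp [Set.Finite.mem_toFinset]
    have := hsub hy
    simp only [Set.Finite.mem_toFinset, Set.mem_setOf_eq] at this
    exact absurd this h.not_ge

private lemma eq_of_rk {x y : S} (hxy : x ≤ y) (h : rk hfin y = rk hfin x) : y = x := by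
  rcases hxy.lt_or_eq with hlt | rfl
  · exact absurd h (Nat.ne_of_gt (rk_lt hfin hlt))
  · rfl

private lemma rk_covby (htree : ∀ x a b : S, a ≤ x → b ≤ x → a ≤ b ∨ b ≤ a) {x y : S} (h : x ⋖ y) : rk hfin y = rk hfin x + 1 := by
  classical
  have hset : (hfin y).toFinset = insert y (hfin x).toFinset := by
    ext s
    simp only [Set.Finite.mem_toFinset, Set.mem_setOf_eq, Finset.mem_insert]
    constructor
    · intro hs
      rcases eq_or_lt_of_le hs with rfl | hlt
      · exact Or.inl rfl
      · right
        rcases htree y s x hs h.lt.le with h1 | h1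
        · rcases eq_or_lt_of_le h1 with rfl | h2
          · exact le_refl _
          · exact h2.le
        · rcases eq_or_lt_of_le h1 with rfl | h2
          · exact le_refl _
          · exact absurd hlt (h.2 h2)
    · rintro (rfl | hs)
      · exact le_refl _
      · exact hs.trans h.lt.le
  rw [rk, hset, Finset.card_insert_of_notMem, rk]
  simp only [Set.Finite.mem_toFinset, Set.mem_setOf_eq]
  exact fun hyx => absurd hyx h.lt.not_ge

private lemma exists_child (hfin : ∀ x : S, {t : S | t ≤ x}.Finite) (htree : ∀ x a b : S, a ≤ x → b ≤ x → a ≤ b ∨ b ≤ a) {x t : S} (h : x < t) : ∃! y : S, x ⋖ y ∧ y ≤ t := by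
  classical
  set A := (hfin t).toFinset.filter (fun s => x < s) with hA
  have hmem : ∀ s, s ∈ A ↔ (s ≤ t ∧ x < s) := by
    intro s; simp [hA, Set.Finite.mem_toFinset]
  have htA : t ∈ A := (hmem t).2 ⟨le_refl t, h⟩
  obtain ⟨m, hmA, hmin⟩ := A.exists_minimal ⟨t, htA⟩
  obtain ⟨hmt, hxm⟩ := (hmem m).1 hmA
  refine ⟨m, ⟨⟨hxm, ?_⟩, hmt⟩, ?_⟩
  · intro z hz hzm
    exact (hmin ((hmem z).2 ⟨hzm.le.trans hmt, hz⟩) hzm.le).not_gt hzm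
  · rintro y ⟨hy, hyt⟩
    have hyA : y ∈ A := (hmem y).2 ⟨hyt, hy.lt⟩
    rcases htree t y m hyt hmt with h1 | h1
    · rcases eq_or_lt_of_le h1 with h2 | h2
      · exact h2
      · exact absurd h2 (fun h => (hmin hyA h.le).not_gt h)
    · rcases eq_or_lt_of_le h1 with h2 | h2
      · exact h2.symm
      · exact absurd h2 (hy.2 hxm)

private lemma exists_parent (hfin : ∀ x : S, {t : S | t ≤ x}.Finite) (htree : ∀ x a b : S, a ≤ x → b ≤ x → a ≤ b ∨ b ≤ a) {x t : S} (h : x < t) : ∃! p : S, x ≤ p ∧ p ⋖ t := by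
  classical
  set A := (hfin t).toFinset.erase t with hA
  have hmem : ∀ s, s ∈ A ↔ (s ≤ t ∧ s ≠ t) := by
    intro s
    simp only [hA, Finset.mem_erase, Set.Finite.mem_toFinset, Set.mem_setOf_eq]
    tauto
  have hxA : x ∈ A := (hmem x).2 ⟨h.le, h.ne⟩
  obtain ⟨m, hmA, hmax⟩ := A.exists_maximal ⟨x, hxA⟩
  obtain ⟨hmt, hmne⟩ := (hmem m).1 hmA
  have hmax' : ∀ z ∈ A, z ≤ m := by
    intro z hz
    obtain ⟨hzt, _⟩ := (hmem z).1 hz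
    rcases htree t z m hzt hmt with h1 | h1
    · exact h1
    · rcases eq_or_lt_of_le h1 with rfl | h2
      · exact le_refl _
      · exact absurd h2 (fun h => (hmax hz h.le).not_gt h)
  have hmlt : m < t := lt_of_le_of_ne hmt hmne
  have hcov : m ⋖ t := by
    refine ⟨hmlt, ?_⟩
    intro c hc1 hc2
    have : c ≤ m := hmax' c ((hmem c).2 ⟨hc2.le, hc2.ne⟩)
    exact absurd this hc1.not_ge
  refine ⟨m, ⟨hmax' x hxA, hcov⟩, ?_⟩
  rintro p ⟨hxp, hp⟩
  have hpA : p ∈ A := (hmem p).2 ⟨hp.lt.le, hp.lt.ne⟩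
  have h1 : p ≤ m := hmax' p hpA
  rcases eq_or_lt_of_le h1 with h2 | h2
  · exact h2
  · exact absurd hmlt (hp.2 h2)

private noncomputable def childEquiv (htree : ∀ x a b : S, a ≤ x → b ≤ x → a ≤ b ∨ b ≤ a) (x : S) :
    (Σ y : {y : S // x ⋖ y}, {t : S // (y : S) ≤ t}) ≃ {t : S // x < t} :=
  Equiv.ofBijective (fun p => ⟨p.2.1, lt_of_lt_of_le p.1.2.lt p.2.2⟩) (by
    constructor
    · rintro ⟨⟨y1, hy1⟩, ⟨t1, ht1⟩⟩ ⟨⟨y2, hy2⟩, ⟨t2, ht2⟩⟩ hpq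
      have ht : t1 = t2 := Subtype.ext_iff.1 hpq
      subst ht
      obtain ⟨c, _, hun⟩ := exists_child hfin htree (lt_of_lt_of_le hy1.lt ht1)
      have e1 : y1 = c := hun y1 ⟨hy1, ht1⟩
      have e2 : y2 = c := hun y2 ⟨hy2, ht2⟩
      subst e2
      cases e1
      rfl
    · rintro ⟨t, ht⟩
      obtain ⟨y, ⟨hy, hyt⟩, _⟩ := exists_child hfin htree ht
      exact ⟨⟨⟨y, hy⟩, ⟨t, hyt⟩⟩, rfl⟩)

private noncomputable def levelEquiv (x : S) :
    (Σ n : ℕ, {t : S // x ≤ t ∧ rk hfin t = rk hfin x + n}) ≃ {t : S // x ≤ t} :=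
  Equiv.ofBijective (fun p => ⟨p.2.1, p.2.2.1⟩) (by
    constructor
    · rintro ⟨n1, ⟨t1, h1, hr1⟩⟩ ⟨n2, ⟨t2, h2, hr2⟩⟩ hpq
      have ht : t1 = t2 := Subtype.ext_iff.1 hpq
      subst ht
      have : n1 = n2 := by omega
      subst this
      rfl
    · rintro ⟨t, ht⟩
      have hle := rk_mono hfin ht
      exact ⟨⟨rk hfin t - rk hfin x, ⟨t, ht, by omega⟩⟩, rfl⟩)

private noncomputable def level0Equiv (x : S) :
    Unit ≃ {t : S // x ≤ t ∧ rk hfin t = rk hfin x + 0} :=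
  Equiv.ofBijective (fun _ => ⟨x, le_refl x, rfl⟩) (by
    constructor
    · intro a b _; rfl
    · rintro ⟨t, ht, hrt⟩
      refine ⟨Unit.unit, ?_⟩
      have : t = x := eq_of_rk hfin ht (by omega)
      subst this
      rfl)

private noncomputable def stepEquiv (htree : ∀ x a b : S, a ≤ x → b ≤ x → a ≤ b ∨ b ≤ a) (x : S) (n : ℕ) :
    (Σ s : {s : S // x ≤ s ∧ rk hfin s = rk hfin x + n}, {y : S // (s : S) ⋖ y}) ≃
      {t : S // x ≤ t ∧ rk hfin t = rk hfin x + (n + 1)} :=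
  Equiv.ofBijective
    (fun p => ⟨p.2.1, p.1.2.1.trans p.2.2.lt.le,
      by rw [rk_covby hfin htree p.2.2, p.1.2.2]; omega⟩) (by
    constructor
    · rintro ⟨⟨s1, hs1⟩, ⟨y1, hy1⟩⟩ ⟨⟨s2, hs2⟩, ⟨y2, hy2⟩⟩ hpq
      have ht : y1 = y2 := Subtype.ext_iff.1 hpq
      subst ht
      have hxy : x < y1 := lt_of_le_of_lt hs1.1 hy1.lt
      obtain ⟨p, _, hun⟩ := exists_parent hfin htree hxy
      have e1 : s1 = p := hun s1 ⟨hs1.1, hy1⟩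
      have e2 : s2 = p := hun s2 ⟨hs2.1, hy2⟩
      subst e2
      cases e1
      rfl
    · rintro ⟨t, hxt, hrt⟩
      have hxtlt : x < t := by
        rcases hxt.lt_or_eq with h | rfl
        · exact h
        · omega
      obtain ⟨p, ⟨hxp, hpt⟩, _⟩ := exists_parent hfin htree hxtlt
      have hrp : rk hfin t = rk hfin p + 1 := rk_covby hfin htree hpt
      exact ⟨⟨⟨p, hxp, by omega⟩, ⟨t, hpt⟩⟩, rfl⟩)

private lemma tsum_le_split (x : S) (g : S → ℝ≥0∞) :
    ∑' t : {t : S // x ≤ t}, g t = g x + ∑' t : {t : S // x < t}, g t := by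
  have hset : {t : S | x ≤ t} = {x} ∪ {t : S | x < t} := by
    ext t
    simp only [Set.mem_setOf_eq, Set.mem_union, Set.mem_singleton_iff]
    constructor
    · intro h
      rcases h.lt_or_eq with h1 | h1
      · exact Or.inr h1
      · exact Or.inl h1.symm
    · rintro (rfl | h)
      · exact le_refl _
      · exact h.le
  have hdisj : Disjoint ({x} : Set S) {t : S | x < t} := by
    simp only [Set.disjoint_left, Set.mem_singleton_iff, Set.mem_setOf_eq]
    rintro a rfl
    exact lt_irrefl a
  calc ∑' t : {t : S // x ≤ t}, g t
      = ∑' t : ↑({x} ∪ {t : S | x < t} : Set S), g t := by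
        exact tsum_congr_set_coe _ hset
    _ = ∑' t : ({x} : Set S), g t + ∑' t : {t : S | x < t}, g t :=
        Summable.tsum_union_disjoint hdisj ENNReal.summable ENNReal.summable
    _ = g x + ∑' t : {t : S // x < t}, g t := by rw [tsum_singleton]; rfl

private def botEquiv (S : Type*) [PartialOrder S] [OrderBot S] :
    S ≃ {t : S // (⊥ : S) ≤ t} where
  toFun s := ⟨s, bot_le⟩
  invFun t := t.1
  left_inv _ := rfl
  right_inv _ := rfl

end Aux

/-- Let `(S, ⪯)` be a rooted tree without leaves (no maximal
elements) and let `α ∈ (0,1)`. A function `F : S → (0,1]` is the UPF of a PDF on `S`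
with constant rate `α` iff `F(e) = 1` and `∑_{y ∈ A(x)} F(y) = (1 − α) F(x)` for every
`x` (where `A(x)` is the set of children of `x`). -/
theorem tree_constantRate_upf_characterization
    {S : Type*} [Countable S] [PartialOrder S] [OrderBot S]
    (hfin : ∀ x : S, {t : S | t ≤ x}.Finite)
    (htree : ∀ x a b : S, a ≤ x → b ≤ x → a ≤ b ∨ b ≤ a)
    (hnoleaf : ∀ x : S, ¬ IsMax x)
    (α : ℝ) (hα0 : 0 < α) (hα1 : α < 1)
    (F : S → ℝ) (hF0 : ∀ x : S, 0 < F x) (hF1 : ∀ x : S, F x ≤ 1) :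
    (∃ f : S → ℝ≥0, (∑' x : S, (f x : ℝ≥0∞) = 1) ∧
      (∀ x : S, ENNReal.ofReal (F x) = ∑' t : {t : S // x ≤ t}, (f t : ℝ≥0∞)) ∧
      (∀ x : S, (f x : ℝ≥0∞) = ENNReal.ofReal (α * F x)))
    ↔
    (F ⊥ = 1 ∧
     ∀ x : S, ∑' y : {y : S // x ⋖ y}, ENNReal.ofReal (F y)
        = ENNReal.ofReal ((1 - α) * F x)) := by
  have hbotsum : ∀ g : S → ℝ≥0∞, ∑' t : {t : S // (⊥ : S) ≤ t}, g t = ∑' x : S, g x := by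
    intro g
    rw [← Equiv.tsum_eq (botEquiv S) (fun t : {t : S // (⊥ : S) ≤ t} => g t)]
    exact tsum_congr fun c => rfl
  -- children decomposition of the strict up-set
  have hchild : ∀ (x : S) (g : S → ℝ≥0∞),
      ∑' t : {t : S // x < t}, g t
        = ∑' (y : {y : S // x ⋖ y}), ∑' (t : {t : S // (y : S) ≤ t}), g t := by
    intro x g
    rw [← Equiv.tsum_eq (childEquiv hfin htree x) (fun t : {t : S // x < t} => g t),
      ENNReal.tsum_sigma']
    exact tsum_congr fun y => tsum_congr fun t => rfl
  constructor
  · rintro ⟨f, hsum, hupf, hrate⟩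
    have hbot : ENNReal.ofReal (F ⊥) = 1 := by
      rw [hupf ⊥]
      exact (hbotsum fun s => (f s : ℝ≥0∞)).trans hsum
    refine ⟨ENNReal.ofReal_eq_one.1 hbot, fun x => ?_⟩
    have h1 : ENNReal.ofReal (F x)
        = (f x : ℝ≥0∞) + ∑' t : {t : S // x < t}, (f t : ℝ≥0∞) := by
      rw [hupf x]
      exact tsum_le_split x (fun t => (f t : ℝ≥0∞))
    have h2 : ∑' t : {t : S // x < t}, (f t : ℝ≥0∞)
        = ∑' y : {y : S // x ⋖ y}, ENNReal.ofReal (F y) := by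
      exact (hchild x fun s => (f s : ℝ≥0∞)).trans
        (tsum_congr fun y => (hupf y).symm)
    have h3 : ENNReal.ofReal (α * F x) + ∑' y : {y : S // x ⋖ y}, ENNReal.ofReal (F y)
        = ENNReal.ofReal (α * F x) + ENNReal.ofReal ((1 - α) * F x) := by
      rw [← ENNReal.ofReal_add (mul_nonneg hα0.le (hF0 x).le)
          (mul_nonneg (by linarith) (hF0 x).le),
        show α * F x + (1 - α) * F x = F x by ring, ← h2, ← hrate x]
      exact h1.symm
    exact (ENNReal.add_right_inj ENNReal.ofReal_ne_top).1 h3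
  · rintro ⟨hbot, hrec⟩
    have hB : ∀ n (x : S),
        ∑' t : {t : S // x ≤ t ∧ rk hfin t = rk hfin x + n}, ENNReal.ofReal (F t)
          = ENNReal.ofReal ((1 - α) ^ n * F x) := by
      intro n
      induction n with
      | zero =>
        intro x
        rw [← Equiv.tsum_eq (level0Equiv hfin x)
          (fun t : {t : S // x ≤ t ∧ rk hfin t = rk hfin x + 0} => ENNReal.ofReal (F t))]
        have : ∑' c : Unit, ENNReal.ofReal (F ((level0Equiv hfin x) c))
            = ∑' _ : Unit, ENNReal.ofReal (F x) := tsum_congr fun c => rfl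
        rw [this, tsum_eq_single Unit.unit
          (fun b hb => absurd (Subsingleton.elim b Unit.unit) hb)]
        simp
      | succ n ih =>
        intro x
        rw [← Equiv.tsum_eq (stepEquiv hfin htree x n)
          (fun t : {t : S // x ≤ t ∧ rk hfin t = rk hfin x + (n + 1)} =>
            ENNReal.ofReal (F t)),
          ENNReal.tsum_sigma']
        have hstep : ∑' (s : {s : S // x ≤ s ∧ rk hfin s = rk hfin x + n})
              (y : {y : S // (s : S) ⋖ y}),
              ENNReal.ofReal (F ((stepEquiv hfin htree x n) ⟨s, y⟩))
            = ∑' (s : {s : S // x ≤ s ∧ rk hfin s = rk hfin x + n})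
              (y : {y : S // (s : S) ⋖ y}), ENNReal.ofReal (F y) :=
          tsum_congr fun s => tsum_congr fun y => rfl
        rw [hstep]
        have hinner : ∀ s : {s : S // x ≤ s ∧ rk hfin s = rk hfin x + n},
            ∑' y : {y : S // (s : S) ⋖ y}, ENNReal.ofReal (F y)
              = ENNReal.ofReal (1 - α) * ENNReal.ofReal (F s) := by
          intro s
          rw [hrec (s : S), ENNReal.ofReal_mul (by linarith : (0:ℝ) ≤ 1 - α)]
        rw [tsum_congr hinner, ENNReal.tsum_mul_left, ih x,
          ← ENNReal.ofReal_mul (by linarith : (0:ℝ) ≤ 1 - α)]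
        ring_nf
    have key : ∀ x : S,
        ∑' t : {t : S // x ≤ t}, ENNReal.ofReal (α * F t) = ENNReal.ofReal (F x) := by
      intro x
      rw [← Equiv.tsum_eq (levelEquiv hfin x)
        (fun t : {t : S // x ≤ t} => ENNReal.ofReal (α * F t)), ENNReal.tsum_sigma']
      have hlev : ∑' (n : ℕ) (t : {t : S // x ≤ t ∧ rk hfin t = rk hfin x + n}),
            ENNReal.ofReal (α * F ((levelEquiv hfin x) ⟨n, t⟩))
          = ∑' (n : ℕ) (t : {t : S // x ≤ t ∧ rk hfin t = rk hfin x + n}),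
            ENNReal.ofReal (α * F t) :=
        tsum_congr fun n => tsum_congr fun t => rfl
      rw [hlev]
      have hA : ∀ n : ℕ,
          ∑' t : {t : S // x ≤ t ∧ rk hfin t = rk hfin x + n}, ENNReal.ofReal (α * F t)
            = ENNReal.ofReal α * ((ENNReal.ofReal (1 - α)) ^ n * ENNReal.ofReal (F x)) := by
        intro n
        calc ∑' t : {t : S // x ≤ t ∧ rk hfin t = rk hfin x + n}, ENNReal.ofReal (α * F t)
            = ∑' t : {t : S // x ≤ t ∧ rk hfin t = rk hfin x + n},
                ENNReal.ofReal α * ENNReal.ofReal (F t) :=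
              tsum_congr fun t => ENNReal.ofReal_mul hα0.le
          _ = ENNReal.ofReal α * ENNReal.ofReal ((1 - α) ^ n * F x) := by
              rw [ENNReal.tsum_mul_left, hB n x]
          _ = ENNReal.ofReal α * ((ENNReal.ofReal (1 - α)) ^ n * ENNReal.ofReal (F x)) := by
              rw [ENNReal.ofReal_mul (pow_nonneg (by linarith) n),
                ENNReal.ofReal_pow (by linarith : (0:ℝ) ≤ 1 - α)]
      calc ∑' (n : ℕ) (t : {t : S // x ≤ t ∧ rk hfin t = rk hfin x + n}),
              ENNReal.ofReal (α * F t)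
          = ∑' n : ℕ, ENNReal.ofReal α * ((ENNReal.ofReal (1 - α)) ^ n * ENNReal.ofReal (F x)) :=
            tsum_congr hA
        _ = ENNReal.ofReal α * ((∑' n : ℕ, (ENNReal.ofReal (1 - α)) ^ n) * ENNReal.ofReal (F x)) := by
            rw [ENNReal.tsum_mul_left, ENNReal.tsum_mul_right]
        _ = ENNReal.ofReal α * ((1 - ENNReal.ofReal (1 - α))⁻¹ * ENNReal.ofReal (F x)) := by
            rw [ENNReal.tsum_geometric]
        _ = ENNReal.ofReal (F x) := by
            have h1 : (1 : ℝ≥0∞) - ENNReal.ofReal (1 - α) = ENNReal.ofReal α := by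
              rw [← ENNReal.ofReal_one, ← ENNReal.ofReal_sub 1 (by linarith : (0:ℝ) ≤ 1 - α)]
              norm_num
            rw [h1, ← mul_assoc, ENNReal.mul_inv_cancel
              (by simpa using hα0 : ENNReal.ofReal α ≠ 0) ENNReal.ofReal_ne_top, one_mul]
    have hco : ∀ r : ℝ, ((r.toNNReal : ℝ≥0) : ℝ≥0∞) = ENNReal.ofReal r := fun r => rfl
    refine ⟨fun x => (α * F x).toNNReal, ?_, ?_, ?_⟩
    · simp only [hco]
      rw [← hbotsum (fun t => ENNReal.ofReal (α * F t)), key ⊥, hbot, ENNReal.ofReal_one]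
    · intro x
      simp only [hco]
      exact (key x).symm
    · intro x
      exact hco _
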